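/- Let n > 1 be non-intersecting, and let p be the smallest prime dividing n. Then n/p has fewer than p distinct prime divisors. -/
import Mathlib

/-- General CRT existence for integers: if `gcd m n` divides `b - a`, there is a common
solution to `x ≡ a [ZMOD m]` and `x ≡ b [ZMOD n]`. -/
lemma int_crt_exists (m n a b : ℤ) (h : (Int.gcd m n : ℤ) ∣ b - a) :
    ∃ x : ℤ, x ≡ a [ZMOD m] ∧ x ≡ b [ZMOD n] := by
  obtain ⟨t, ht⟩ := h
  have hg : (Int.gcd m n : ℤ) = m * Int.gcdA m n + n * Int.gcdB m n := Int.gcd_eq_gcd_ab m n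
  refine ⟨a + t * (m * Int.gcdA m n), ?_, ?_⟩
  · have : m ∣ (a + t * (m * Int.gcdA m n)) - a := ⟨t * Int.gcdA m n, by ring⟩
    exact (Int.modEq_iff_dvd.mpr this).symm
  · have : n ∣ (a + t * (m * Int.gcdA m n)) - b := by
      refine ⟨-(t * Int.gcdB m n), ?_⟩
      have hb : b = a + (Int.gcd m n : ℤ) * t := by linarith [ht]
      rw [hb, hg]; ring
    exact (Int.modEq_iff_dvd.mpr this).symm

/-- If `n > 1` is non-intersecting (there are residues `a d` for each divisor `d > 1` of `n`
such that the congruence set `{a d mod d : d ∣ n, d > 1}` is coprime disjoint), and `p` is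
the smallest prime dividing `n`, then `n / p` has fewer than `p` distinct prime divisors. -/
theorem minFac_quotient_primeFactors_lt (n : ℕ) (hn : 1 < n) (a : ℕ → ℤ)
    (hCD : ∀ d d' : ℕ, d ∣ n → d' ∣ n → 1 < d → 1 < d' → d ≠ d' →
      (∃ x : ℤ, x ≡ a d [ZMOD (d : ℤ)] ∧ x ≡ a d' [ZMOD (d' : ℤ)]) →
      Nat.gcd d d' = 1) :
    (n / n.minFac).primeFactors.card < n.minFac := by
  set p := n.minFac with hpdef
  have hp : p.Prime := Nat.minFac_prime hn.ne'
  have hpn : p ∣ n := Nat.minFac_dvd n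
  haveI : NeZero p := ⟨hp.ne_zero⟩
  haveI : Fact p.Prime := ⟨hp⟩
  have hppos : 0 < p := hp.pos
  have hnpos : 0 < n := by omega
  -- each prime q dividing n/p gives a divisor p*q of n
  have hdvd : ∀ q ∈ (n / p).primeFactors, p * q ∣ n := by
    intro q hq
    have hq' : q ∣ n / p := Nat.dvd_of_mem_primeFactors hq
    have : p * q ∣ p * (n / p) := mul_dvd_mul_left p hq'
    rwa [Nat.mul_div_cancel' hpn] at this
  -- key: if two distinct divisors d d' of n have gcd p and a d ≡ a d' mod p, contradiction
  have key : ∀ d d' : ℕ, d ∣ n → d' ∣ n → 1 < d → 1 < d' → d ≠ d' →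
      Nat.gcd d d' = p → ¬ ((a d : ZMod p) = (a d' : ZMod p)) := by
    intro d d' hd hd' h1d h1d' hne hgcd heq
    have hmod : (p : ℤ) ∣ a d' - a d := by
      have := (ZMod.intCast_eq_intCast_iff' (a d) (a d') p).mp heq
      exact Int.ModEq.dvd this
    have hgz : (Int.gcd (d : ℤ) (d' : ℤ) : ℤ) = (p : ℤ) := by
      rw [Int.gcd_natCast_natCast, hgcd]
    have hex : ∃ x : ℤ, x ≡ a d [ZMOD (d : ℤ)] ∧ x ≡ a d' [ZMOD (d' : ℤ)] := by
      apply int_crt_exists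
      rw [hgz]; exact hmod
    have := hCD d d' hd hd' h1d h1d' hne hex
    rw [this] at hgcd
    have := hp.two_le
    omega
  -- the map q ↦ a (p*q) mod p is injective on primeFactors (n/p)
  set S := (n / p).primeFactors with hS
  set f : ℕ → ZMod p := fun q => ((a (p * q) : ZMod p)) with hf
  have hinj : Set.InjOn f S := by
    intro q hq q' hq' heq
    by_contra hne
    have hqp : q.Prime := Nat.prime_of_mem_primeFactors hq
    have hq'p : q'.Prime := Nat.prime_of_mem_primeFactors hq'
    have hgcd : Nat.gcd (p * q) (p * q') = p := by
      rw [Nat.gcd_mul_left, (Nat.coprime_primes hqp hq'p).mpr hne, mul_one]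
    have h1 : 1 < p * q := by nlinarith [hp.two_le, hqp.two_le]
    have h2 : 1 < p * q' := by nlinarith [hp.two_le, hq'p.two_le]
    have hnepq : p * q ≠ p * q' := by
      intro h; exact hne (Nat.eq_of_mul_eq_mul_left hppos h)
    exact key (p * q) (p * q') (hdvd q hq) (hdvd q' hq') h1 h2 hnepq hgcd heq
  -- a p mod p is not in the image
  have hnotmem : (a p : ZMod p) ∉ S.image f := by
    intro hmem
    obtain ⟨q, hq, hfq⟩ := Finset.mem_image.mp hmem
    have hqp : q.Prime := Nat.prime_of_mem_primeFactors hq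
    have hgcd : Nat.gcd p (p * q) = p := Nat.gcd_eq_left ⟨q, rfl⟩
    have h2 : 1 < p * q := by nlinarith [hp.two_le, hqp.two_le]
    have hnepq : p ≠ p * q := by
      intro h
      have : q = 1 := by
        have := hqp.two_le; nlinarith
      exact hqp.one_lt.ne' this
    exact key p (p * q) hpn (hdvd q hq) hp.one_lt h2 hnepq hgcd hfq.symm
  -- counting
  have hcardim : (S.image f).card = S.card := Finset.card_image_of_injOn hinj
  have hins : (insert ((a p : ZMod p)) (S.image f)).card = S.card + 1 := by
    rw [Finset.card_insert_of_notMem hnotmem, hcardim]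
  have hle : (insert ((a p : ZMod p)) (S.image f)).card ≤ Fintype.card (ZMod p) :=
    Finset.card_le_univ _
  rw [hins, ZMod.card p] at hle
  omega
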